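/- Subadditivity of the mean-field pressure: for the symmetric Hamiltonian H_N(x) = N·binom(N,n)^{-1}·Σ φ(x_{i(1)},…,x_{i(n)}) with φ bounded below, Borel measurable, symmetric, and α^{⊗n}(φ) < ∞, the sequence N·p(N), where p(N) = N^{-1} log ∫ e^{−H_N} dα^{⊗N}, satisfies (N₁+N₂)p(N₁+N₂) ≤ N₁p(N₁) + N₂p(N₂) for N₁,N₂ ≥ n. Moreover p(N) ≥ −α^{⊗n}(φ) for each N ≥ n, so p(N) converges to a finite limit. -/

import Mathlib

open MeasureTheory Filter
open scoped ENNReal Classical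

/-- `e^{-x}` for `x : EReal`, with values in `ℝ≥0∞` (so `e^{-⊤} = 0`, `e^{-⊥} = ∞`). -/
noncomputable def expNeg (x : EReal) : ℝ≥0∞ :=
  if x = ⊤ then 0 else if x = ⊥ then ⊤ else ENNReal.ofReal (Real.exp (-x.toReal))

namespace PressureProof

lemma expNeg_coe (t : ℝ) : expNeg (t : EReal) = ENNReal.ofReal (Real.exp (-t)) := by
  rw [expNeg, if_neg (EReal.coe_ne_top t), if_neg (EReal.coe_ne_bot t), EReal.toReal_coe]

lemma ereal_coe_sum {β : Type*} (s : Finset β) (f : β → ℝ) :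
    ((∑ b ∈ s, f b : ℝ) : EReal) = ∑ b ∈ s, (f b : EReal) :=
  map_sum (⟨⟨(fun r : ℝ => (r : EReal)), EReal.coe_zero⟩, EReal.coe_add⟩ : ℝ →+ EReal) f s

section MeasureHelpers

variable {Ω : Type*} [MeasurableSpace Ω] (α : Measure Ω) [IsProbabilityMeasure α]

/-- The measurable equivalence `(κ → Ω) ≃ᵐ (ι₁ → Ω) × (ι₂ → Ω)` induced by
`e : ι₁ ⊕ ι₂ ≃ κ`. -/
def pairEquiv (Ω : Type*) [MeasurableSpace Ω] {ι₁ ι₂ κ : Type*} (e : ι₁ ⊕ ι₂ ≃ κ) :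
    (κ → Ω) ≃ᵐ (ι₁ → Ω) × (ι₂ → Ω) :=
  (MeasurableEquiv.piCongrLeft (fun _ : κ => Ω) e).symm.trans
    (MeasurableEquiv.sumPiEquivProdPi fun _ : ι₁ ⊕ ι₂ => Ω)

lemma pairEquiv_apply {Ω : Type*} [MeasurableSpace Ω] {ι₁ ι₂ κ : Type*} (e : ι₁ ⊕ ι₂ ≃ κ)
    (x : κ → Ω) :
    pairEquiv Ω e x = (fun i => x (e (Sum.inl i)), fun i => x (e (Sum.inr i))) := by
  rfl

lemma measurePreserving_pairEquiv {ι₁ ι₂ κ : Type*} [Fintype ι₁] [Fintype ι₂] [Fintype κ]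
    (e : ι₁ ⊕ ι₂ ≃ κ) :
    MeasurePreserving (pairEquiv Ω e) (Measure.pi fun _ : κ => α)
      ((Measure.pi fun _ : ι₁ => α).prod (Measure.pi fun _ : ι₂ => α)) := by
  have h1 : MeasurePreserving (MeasurableEquiv.piCongrLeft (fun _ : κ => Ω) e).symm
      (Measure.pi fun _ : κ => α) (Measure.pi fun _ : ι₁ ⊕ ι₂ => α) :=
    (measurePreserving_piCongrLeft (fun _ : κ => α) e).symm _
  have h2 := measurePreserving_sumPiEquivProdPi (X := fun _ : ι₁ ⊕ ι₂ => Ω)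
    (fun _ : ι₁ ⊕ ι₂ => α)
  exact h2.comp h1

lemma measurePreserving_comp_inj {ι κ : Type*} [Fintype ι] [Fintype κ]
    (j : ι → κ) (hj : Function.Injective j) :
    MeasurePreserving (fun x : κ → Ω => x ∘ j)
      (Measure.pi fun _ : κ => α) (Measure.pi fun _ : ι => α) := by
  classical
  set s : Finset κ := (Finset.univ.image j)ᶜ with hs
  have hinj : Function.Injective (Sum.elim j (Subtype.val : {x // x ∈ s} → κ)) := by
    refine Function.Injective.sumElim hj Subtype.val_injective ?_
    intro a b hab
    have hb : ↑b ∉ Finset.univ.image j := by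
      have hb0 := b.2
      simp only [hs, Finset.mem_compl] at hb0
      exact hb0
    exact hb (by rw [← hab]; exact Finset.mem_image_of_mem j (Finset.mem_univ a))
  have hbij : Function.Bijective (Sum.elim j (Subtype.val : {x // x ∈ s} → κ)) := by
    rw [Fintype.bijective_iff_injective_and_card]
    refine ⟨hinj, ?_⟩
    rw [Fintype.card_sum, Fintype.card_coe]
    have hcard : s.card = Fintype.card κ - Fintype.card ι := by
      rw [hs, Finset.card_compl, Finset.card_image_of_injective _ hj, Finset.card_univ]
    have hle : Fintype.card ι ≤ Fintype.card κ := Fintype.card_le_of_injective j hj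
    omega
  set e : ι ⊕ {x // x ∈ s} ≃ κ := Equiv.ofBijective _ hbij with he
  have h := measurePreserving_pairEquiv (α := α) e
  have hfst : MeasurePreserving (Prod.fst : ((ι → Ω) × ({x // x ∈ s} → Ω)) → (ι → Ω))
      ((Measure.pi fun _ : ι => α).prod (Measure.pi fun _ : {x // x ∈ s} => α))
      (Measure.pi fun _ : ι => α) := by
    refine ⟨measurable_fst, ?_⟩
    rw [Measure.map_fst_prod]
    simp
  have hcomp := hfst.comp h
  have heq : (fun x : κ → Ω => x ∘ j) = (Prod.fst ∘ (pairEquiv Ω e)) := by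
    funext x
    rw [Function.comp_apply, pairEquiv_apply]
    rfl
  rw [heq]

  exact hcomp

lemma integrable_comp_inj {ι κ : Type*} [Fintype ι] [Fintype κ]
    (j : ι → κ) (hj : Function.Injective j) (g : (ι → Ω) → ℝ) (hgm : Measurable g)
    (hg : Integrable g (Measure.pi fun _ : ι => α)) :
    Integrable (fun x : κ → Ω => g (x ∘ j)) (Measure.pi fun _ : κ => α) := by
  have h := measurePreserving_comp_inj α j hj
  have hg' : Integrable g (Measure.map (fun x : κ → Ω => x ∘ j)
      (Measure.pi fun _ : κ => α)) := by rw [h.map_eq]; exact hg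
  exact (integrable_map_measure hg'.aestronglyMeasurable h.measurable.aemeasurable).1 hg'

lemma integral_comp_inj {ι κ : Type*} [Fintype ι] [Fintype κ]
    (j : ι → κ) (hj : Function.Injective j) (g : (ι → Ω) → ℝ) (hgm : Measurable g) :
    ∫ x : κ → Ω, g (x ∘ j) ∂(Measure.pi fun _ : κ => α)
      = ∫ z, g z ∂(Measure.pi fun _ : ι => α) := by
  have h := measurePreserving_comp_inj α j hj
  rw [← h.map_eq, integral_map h.measurable.aemeasurable]
  rw [h.map_eq]
  exact hgm.aestronglyMeasurable

lemma integral_pair {ι₁ ι₂ κ : Type*} [Fintype ι₁] [Fintype ι₂] [Fintype κ]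
    (e : ι₁ ⊕ ι₂ ≃ κ) (f : (ι₁ → Ω) → ℝ) (g : (ι₂ → Ω) → ℝ) :
    ∫ x : κ → Ω, f (fun i => x (e (Sum.inl i))) * g (fun i => x (e (Sum.inr i)))
        ∂(Measure.pi fun _ : κ => α)
      = (∫ z, f z ∂(Measure.pi fun _ : ι₁ => α)) * ∫ z, g z ∂(Measure.pi fun _ : ι₂ => α) := by
  have hmp := measurePreserving_pairEquiv (α := α) e
  have h2 := hmp.integral_comp' (g := fun z : (ι₁ → Ω) × (ι₂ → Ω) => f z.1 * g z.2)
  rw [← MeasureTheory.integral_prod_mul f g, ← h2]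
  refine integral_congr_ae (Filter.Eventually.of_forall fun x => ?_)
  simp only [pairEquiv_apply]

end MeasureHelpers

section Combinatorics

variable {n : ℕ}

lemma mem_powersetCard_card {N m : ℕ} {S : Finset (Fin N)}
    (hS : S ∈ Finset.powersetCard m (Finset.univ : Finset (Fin N))) : S.card = m :=
  (Finset.mem_powersetCard.1 hS).2

lemma mem_powersetCard_card_compl {N₁ N₂ : ℕ} {S : Finset (Fin (N₁ + N₂))}
    (hS : S ∈ Finset.powersetCard N₁ (Finset.univ : Finset (Fin (N₁ + N₂)))) :
    Sᶜ.card = N₂ := by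
  rw [Finset.card_compl, mem_powersetCard_card hS, Fintype.card_fin]
  omega

lemma card_SM (N : ℕ) :
    ((Finset.univ : Finset (Fin n → Fin N)).filter StrictMono).card = N.choose n := by
  have h : N.choose n = (Finset.powersetCard n (Finset.univ : Finset (Fin N))).card := by
    rw [Finset.card_powersetCard, Finset.card_univ, Fintype.card_fin]
  rw [h]
  refine Finset.card_bij' (fun j _ => Finset.univ.image j)
    (fun S hS => ⇑(S.orderEmbOfFin (mem_powersetCard_card hS))) ?_ ?_ ?_ ?_
  · intro j hj
    have hsm : StrictMono j := (Finset.mem_filter.1 hj).2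
    refine Finset.mem_powersetCard.2 ⟨Finset.subset_univ _, ?_⟩
    rw [Finset.card_image_of_injective _ hsm.injective, Finset.card_univ, Fintype.card_fin]
  · intro S hS
    exact Finset.mem_filter.2 ⟨Finset.mem_univ _, (S.orderEmbOfFin _).strictMono⟩
  · intro j hj
    have hsm : StrictMono j := (Finset.mem_filter.1 hj).2
    exact (Finset.orderEmbOfFin_unique _ (fun i => Finset.mem_image_of_mem j (Finset.mem_univ i))
      hsm).symm
  · intro S hS
    apply Finset.coe_injective
    rw [Finset.coe_image, Finset.coe_univ, Set.image_univ, Finset.range_orderEmbOfFin]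

lemma card_filter_mem {N m : ℕ} (hn : 1 ≤ n) (k : Fin n → Fin N) (hk : StrictMono k)
    (hnm : n ≤ m) :
    ((Finset.powersetCard m (Finset.univ : Finset (Fin N))).filter
      (fun S => ∀ i, k i ∈ S)).card = (N - n).choose (m - n) := by
  classical
  set A : Finset (Fin N) := Finset.univ.image k with hA
  have hAcard : A.card = n := by
    rw [hA, Finset.card_image_of_injective _ hk.injective, Finset.card_univ, Fintype.card_fin]
  have key : ((Finset.powersetCard m (Finset.univ : Finset (Fin N))).filter
      (fun S => ∀ i, k i ∈ S)).card = (Finset.powersetCard (m - n) Aᶜ).card := by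
    refine Finset.card_bij' (fun S _ => S \ A) (fun T _ => A ∪ T) ?_ ?_ ?_ ?_
    · intro S hS
      obtain ⟨hSP, hSmem⟩ := Finset.mem_filter.1 hS
      have hsub : A ⊆ S := by
        rw [hA]
        exact Finset.image_subset_iff.2 fun i _ => hSmem i
      refine Finset.mem_powersetCard.2 ⟨?_, ?_⟩
      · intro a ha
        rw [Finset.mem_sdiff] at ha
        exact Finset.mem_compl.2 ha.2
      · rw [Finset.card_sdiff_of_subset hsub, hAcard, mem_powersetCard_card hSP]
    · intro T hT
      obtain ⟨hTsub, hTcard⟩ := Finset.mem_powersetCard.1 hT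
      have hdis : Disjoint A T := by
        rw [Finset.disjoint_left]
        intro a haA haT
        exact (Finset.mem_compl.1 (hTsub haT)) haA
      refine Finset.mem_filter.2 ⟨Finset.mem_powersetCard.2 ⟨Finset.subset_univ _, ?_⟩, ?_⟩
      · rw [Finset.card_union_of_disjoint hdis, hAcard, hTcard]
        omega
      · intro i
        exact Finset.mem_union_left _ (by rw [hA]; exact Finset.mem_image_of_mem k (Finset.mem_univ i))
    · intro S hS
      obtain ⟨hSP, hSmem⟩ := Finset.mem_filter.1 hS
      have hsub : A ⊆ S := by
        rw [hA]
        exact Finset.image_subset_iff.2 fun i _ => hSmem i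
      exact Finset.union_sdiff_of_subset hsub
    · intro T hT
      obtain ⟨hTsub, hTcard⟩ := Finset.mem_powersetCard.1 hT
      have hdis : Disjoint A T := by
        rw [Finset.disjoint_left]
        intro a haA haT
        exact (Finset.mem_compl.1 (hTsub haT)) haA
      exact Finset.union_sdiff_cancel_left hdis
  rw [key, Finset.card_powersetCard, Finset.card_compl, hAcard, Fintype.card_fin]

lemma card_filter_mem_compl {N₁ N₂ : ℕ} (hn : 1 ≤ n) (k : Fin n → Fin (N₁ + N₂))
    (hk : StrictMono k) (h₂ : n ≤ N₂) :
    ((Finset.powersetCard N₁ (Finset.univ : Finset (Fin (N₁ + N₂)))).filter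
      (fun S => ∀ i, k i ∈ Sᶜ)).card = (N₁ + N₂ - n).choose (N₂ - n) := by
  classical
  have key : ((Finset.powersetCard N₁ (Finset.univ : Finset (Fin (N₁ + N₂)))).filter
      (fun S => ∀ i, k i ∈ Sᶜ)).card
      = ((Finset.powersetCard N₂ (Finset.univ : Finset (Fin (N₁ + N₂)))).filter
        (fun S => ∀ i, k i ∈ S)).card := by
    refine Finset.card_nbij' (fun S => Sᶜ) (fun T => Tᶜ) ?_ ?_ ?_ ?_
    · intro S hS
      obtain ⟨hSP, hSmem⟩ := Finset.mem_filter.1 hS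
      exact Finset.mem_filter.2 ⟨Finset.mem_powersetCard.2
        ⟨Finset.subset_univ _, mem_powersetCard_card_compl hSP⟩, hSmem⟩
    · intro T hT
      obtain ⟨hTP, hTmem⟩ := Finset.mem_filter.1 hT
      refine Finset.mem_filter.2 ⟨Finset.mem_powersetCard.2 ⟨Finset.subset_univ _, ?_⟩, ?_⟩
      · rw [Finset.card_compl, mem_powersetCard_card hTP, Fintype.card_fin]
        omega
      · intro i
        rw [compl_compl]
        exact hTmem i
    · intro S _; exact compl_compl S
    · intro T _; exact compl_compl T
  rw [key, card_filter_mem hn k hk h₂]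

lemma sum_comp_emb {m N : ℕ} (hm : 0 < m) (S : Finset (Fin N)) (hS : S.card = m)
    (F : (Fin n → Fin N) → ℝ) :
    ∑ j : Fin n → Fin m, (if StrictMono j then F (⇑(S.orderEmbOfFin hS) ∘ j) else 0)
      = ∑ k : Fin n → Fin N, (if StrictMono k ∧ ∀ i, k i ∈ S then F k else 0) := by
  classical
  rw [← Finset.sum_filter, ← Finset.sum_filter]
  refine Finset.sum_nbij' (fun j => ⇑(S.orderEmbOfFin hS) ∘ j)
    (fun k => fun a => if h : k a ∈ S then (S.orderIsoOfFin hS).symm ⟨k a, h⟩ else ⟨0, hm⟩)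
    ?_ ?_ ?_ ?_ ?_
  · intro j hj
    have hsm : StrictMono j := (Finset.mem_filter.1 hj).2
    refine Finset.mem_filter.2 ⟨Finset.mem_univ _,
      (S.orderEmbOfFin hS).strictMono.comp hsm, fun i => S.orderEmbOfFin_mem hS (j i)⟩
  · intro k hk
    obtain ⟨-, hsm, hmem⟩ := Finset.mem_filter.1 hk
    refine Finset.mem_filter.2 ⟨Finset.mem_univ _, ?_⟩
    intro a b hab
    dsimp only
    rw [dif_pos (hmem a), dif_pos (hmem b)]
    exact (S.orderIsoOfFin hS).symm.strictMono (Subtype.mk_lt_mk.2 (hsm hab))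
  · intro j hj
    funext a
    dsimp only [Function.comp_apply]
    rw [dif_pos (S.orderEmbOfFin_mem hS (j a))]
    rw [show (⟨(S.orderEmbOfFin hS) (j a), S.orderEmbOfFin_mem hS (j a)⟩ : {x // x ∈ S})
        = S.orderIsoOfFin hS (j a) from Subtype.ext (S.coe_orderIsoOfFin_apply hS (j a)).symm,
      OrderIso.symm_apply_apply]
  · intro k hk
    obtain ⟨-, hsm, hmem⟩ := Finset.mem_filter.1 hk
    funext a
    show (S.orderEmbOfFin hS) (if h : k a ∈ S then (S.orderIsoOfFin hS).symm ⟨k a, h⟩ else ⟨0, hm⟩) = k a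
    rw [dif_pos (hmem a), ← S.coe_orderIsoOfFin_apply hS, OrderIso.apply_symm_apply]
  · intro j hj
    rfl

lemma coeff_eq {N₁ N₂ : ℕ} (hn : 1 ≤ n) (h₁ : n ≤ N₁) (h₂ : n ≤ N₂) :
    (((N₁ + N₂).choose N₁ : ℝ))⁻¹ * ((N₁ : ℝ) / (N₁.choose n : ℝ)
        * (((N₁ + N₂ - n).choose (N₁ - n) : ℕ) : ℝ)
      + (N₂ : ℝ) / (N₂.choose n : ℝ) * (((N₁ + N₂ - n).choose (N₂ - n) : ℕ) : ℝ))
      = ((N₁ + N₂ : ℕ) : ℝ) / (((N₁ + N₂).choose n : ℕ) : ℝ) := by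
  have key₁ : (N₁ + N₂).choose N₁ * N₁.choose n
      = (N₁ + N₂).choose n * ((N₁ + N₂) - n).choose (N₁ - n) :=
    Nat.choose_mul h₁
  have key₂ : (N₁ + N₂).choose N₁ * N₂.choose n
      = (N₁ + N₂).choose n * ((N₁ + N₂) - n).choose (N₂ - n) := by
    have hsymm : (N₁ + N₂).choose N₂ = (N₁ + N₂).choose N₁ := by
      rw [← Nat.choose_symm (Nat.le_add_right N₁ N₂)]
      congr 1
      omega
    rw [← hsymm]
    exact Nat.choose_mul h₂
  have hb : (0:ℝ) < ((N₁ + N₂).choose N₁ : ℝ) := by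
    exact_mod_cast Nat.choose_pos (Nat.le_add_right _ _)
  have hc₁ : (0:ℝ) < (N₁.choose n : ℝ) := by exact_mod_cast Nat.choose_pos h₁
  have hc₂ : (0:ℝ) < (N₂.choose n : ℝ) := by exact_mod_cast Nat.choose_pos h₂
  have ha : (0:ℝ) < ((N₁ + N₂).choose n : ℝ) := by
    exact_mod_cast Nat.choose_pos (le_trans h₁ (Nat.le_add_right _ _))
  have k₁ : ((N₁ + N₂).choose N₁ : ℝ) * (N₁.choose n : ℝ)
      = ((N₁ + N₂).choose n : ℝ) * (((N₁ + N₂) - n).choose (N₁ - n) : ℝ) := by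
    exact_mod_cast key₁
  have k₂ : ((N₁ + N₂).choose N₁ : ℝ) * (N₂.choose n : ℝ)
      = ((N₁ + N₂).choose n : ℝ) * (((N₁ + N₂) - n).choose (N₂ - n) : ℝ) := by
    exact_mod_cast key₂
  have e₁ : (((N₁ + N₂) - n).choose (N₁ - n) : ℝ)
      = ((N₁ + N₂).choose N₁ : ℝ) * (N₁.choose n : ℝ) / ((N₁ + N₂).choose n : ℝ) := by
    rw [k₁]; field_simp
  have e₂ : (((N₁ + N₂) - n).choose (N₂ - n) : ℝ)
      = ((N₁ + N₂).choose N₁ : ℝ) * (N₂.choose n : ℝ) / ((N₁ + N₂).choose n : ℝ) := by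
    rw [k₂]; field_simp
  rw [e₁, e₂]
  push_cast
  field_simp

end Combinatorics

section CombIdentity

variable {Ω : Type*} {n : ℕ}

lemma comb_identity {N₁ N₂ : ℕ} (hn : 1 ≤ n) (h₁ : n ≤ N₁) (h₂ : n ≤ N₂)
    (ρ : (Fin n → Ω) → ℝ) (x : Fin (N₁ + N₂) → Ω) :
    ((N₁ + N₂ : ℕ) : ℝ) / (((N₁ + N₂).choose n : ℕ) : ℝ)
        * ∑ k : Fin n → Fin (N₁ + N₂), (if StrictMono k then ρ (x ∘ k) else 0)
      = ∑ S ∈ (Finset.powersetCard N₁ (Finset.univ : Finset (Fin (N₁ + N₂)))).attach,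
          ((((N₁ + N₂).choose N₁ : ℕ) : ℝ))⁻¹ *
            ((N₁ : ℝ) / ((N₁.choose n : ℕ) : ℝ) * ∑ j : Fin n → Fin N₁,
                (if StrictMono j then
                  ρ (x ∘ ⇑(S.1.orderEmbOfFin (mem_powersetCard_card S.2)) ∘ j) else 0)
            + (N₂ : ℝ) / ((N₂.choose n : ℕ) : ℝ) * ∑ j : Fin n → Fin N₂,
                (if StrictMono j then
                  ρ (x ∘ ⇑((S.1ᶜ).orderEmbOfFin (mem_powersetCard_card_compl S.2)) ∘ j) else 0)) := by
  classical
  set w : ℝ := ((((N₁ + N₂).choose N₁ : ℕ) : ℝ))⁻¹ with hw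
  set r₁ : ℝ := (N₁ : ℝ) / ((N₁.choose n : ℕ) : ℝ) with hr₁
  set r₂ : ℝ := (N₂ : ℝ) / ((N₂.choose n : ℕ) : ℝ) with hr₂
  set d₁ : ℝ := (((N₁ + N₂ - n).choose (N₁ - n) : ℕ) : ℝ) with hd₁
  set d₂ : ℝ := (((N₁ + N₂ - n).choose (N₂ - n) : ℕ) : ℝ) with hd₂
  have hA : ∀ S : {S // S ∈ Finset.powersetCard N₁ (Finset.univ : Finset (Fin (N₁ + N₂)))},
      (∑ j : Fin n → Fin N₁, (if StrictMono j then
          ρ (x ∘ ⇑(S.1.orderEmbOfFin (mem_powersetCard_card S.2)) ∘ j) else 0))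
        = ∑ k : Fin n → Fin (N₁ + N₂),
            (if StrictMono k ∧ ∀ i, k i ∈ S.1 then ρ (x ∘ k) else 0) :=
    fun S => sum_comp_emb (lt_of_lt_of_le hn h₁) S.1 (mem_powersetCard_card S.2)
      (fun k => ρ (x ∘ k))
  have hB : ∀ S : {S // S ∈ Finset.powersetCard N₁ (Finset.univ : Finset (Fin (N₁ + N₂)))},
      (∑ j : Fin n → Fin N₂, (if StrictMono j then
          ρ (x ∘ ⇑((S.1ᶜ).orderEmbOfFin (mem_powersetCard_card_compl S.2)) ∘ j) else 0))
        = ∑ k : Fin n → Fin (N₁ + N₂),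
            (if StrictMono k ∧ ∀ i, k i ∈ S.1ᶜ then ρ (x ∘ k) else 0) :=
    fun S => sum_comp_emb (lt_of_lt_of_le hn h₂) S.1ᶜ (mem_powersetCard_card_compl S.2)
      (fun k => ρ (x ∘ k))
  have hRHS : (∑ S ∈ (Finset.powersetCard N₁
        (Finset.univ : Finset (Fin (N₁ + N₂)))).attach,
        w * (r₁ * ∑ j : Fin n → Fin N₁, (if StrictMono j then
              ρ (x ∘ ⇑(S.1.orderEmbOfFin (mem_powersetCard_card S.2)) ∘ j) else 0)
          + r₂ * ∑ j : Fin n → Fin N₂, (if StrictMono j then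
              ρ (x ∘ ⇑((S.1ᶜ).orderEmbOfFin (mem_powersetCard_card_compl S.2)) ∘ j) else 0)))
      = ∑ k : Fin n → Fin (N₁ + N₂),
          (if StrictMono k then (w * (r₁ * d₁ + r₂ * d₂)) * ρ (x ∘ k) else 0) := by
    calc (∑ S ∈ (Finset.powersetCard N₁ (Finset.univ : Finset (Fin (N₁ + N₂)))).attach,
        w * (r₁ * ∑ j : Fin n → Fin N₁, (if StrictMono j then
              ρ (x ∘ ⇑(S.1.orderEmbOfFin (mem_powersetCard_card S.2)) ∘ j) else 0)
          + r₂ * ∑ j : Fin n → Fin N₂, (if StrictMono j then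
              ρ (x ∘ ⇑((S.1ᶜ).orderEmbOfFin (mem_powersetCard_card_compl S.2)) ∘ j) else 0)))
        = ∑ S ∈ (Finset.powersetCard N₁ (Finset.univ : Finset (Fin (N₁ + N₂)))).attach,
            (w * r₁ * ∑ k : Fin n → Fin (N₁ + N₂),
                (if StrictMono k ∧ ∀ i, k i ∈ S.1 then ρ (x ∘ k) else 0)
            + w * r₂ * ∑ k : Fin n → Fin (N₁ + N₂),
                (if StrictMono k ∧ ∀ i, k i ∈ S.1ᶜ then ρ (x ∘ k) else 0)) := by
          refine Finset.sum_congr rfl fun S _ => ?_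
          rw [hA S, hB S]; ring
      _ = ∑ S ∈ Finset.powersetCard N₁ (Finset.univ : Finset (Fin (N₁ + N₂))),
            (w * r₁ * ∑ k : Fin n → Fin (N₁ + N₂),
                (if StrictMono k ∧ ∀ i, k i ∈ S then ρ (x ∘ k) else 0)
            + w * r₂ * ∑ k : Fin n → Fin (N₁ + N₂),
                (if StrictMono k ∧ ∀ i, k i ∈ Sᶜ then ρ (x ∘ k) else 0)) :=
          Finset.sum_attach (Finset.powersetCard N₁ (Finset.univ : Finset (Fin (N₁ + N₂))))
            (fun S => w * r₁ * ∑ k : Fin n → Fin (N₁ + N₂),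
                (if StrictMono k ∧ ∀ i, k i ∈ S then ρ (x ∘ k) else 0)
              + w * r₂ * ∑ k : Fin n → Fin (N₁ + N₂),
                (if StrictMono k ∧ ∀ i, k i ∈ Sᶜ then ρ (x ∘ k) else 0))
      _ = w * r₁ * (∑ S ∈ Finset.powersetCard N₁ (Finset.univ : Finset (Fin (N₁ + N₂))),
              ∑ k : Fin n → Fin (N₁ + N₂),
                (if StrictMono k ∧ ∀ i, k i ∈ S then ρ (x ∘ k) else 0))
          + w * r₂ * (∑ S ∈ Finset.powersetCard N₁ (Finset.univ : Finset (Fin (N₁ + N₂))),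
              ∑ k : Fin n → Fin (N₁ + N₂),
                (if StrictMono k ∧ ∀ i, k i ∈ Sᶜ then ρ (x ∘ k) else 0)) := by
          rw [Finset.sum_add_distrib, ← Finset.mul_sum, ← Finset.mul_sum]
      _ = w * r₁ * (∑ k : Fin n → Fin (N₁ + N₂),
              (if StrictMono k then d₁ * ρ (x ∘ k) else 0))
          + w * r₂ * (∑ k : Fin n → Fin (N₁ + N₂),
              (if StrictMono k then d₂ * ρ (x ∘ k) else 0)) := by
          congr 1
          · congr 1
            rw [Finset.sum_comm]
            refine Finset.sum_congr rfl fun k _ => ?_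
            by_cases h : StrictMono k
            · simp only [h, true_and, if_true]
              rw [← Finset.sum_filter, Finset.sum_const, card_filter_mem hn k h h₁,
                nsmul_eq_mul, hd₁]
            · simp [h]
          · congr 1
            rw [Finset.sum_comm]
            refine Finset.sum_congr rfl fun k _ => ?_
            by_cases h : StrictMono k
            · simp only [h, true_and, if_true]
              rw [← Finset.sum_filter, Finset.sum_const, card_filter_mem_compl hn k h h₂,
                nsmul_eq_mul, hd₂]
            · simp [h]
      _ = ∑ k : Fin n → Fin (N₁ + N₂),
            (if StrictMono k then (w * (r₁ * d₁ + r₂ * d₂)) * ρ (x ∘ k) else 0) := by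
          rw [Finset.mul_sum, Finset.mul_sum, ← Finset.sum_add_distrib]
          refine Finset.sum_congr rfl fun k _ => ?_
          by_cases h : StrictMono k
          · simp only [h, if_true]; ring
          · simp [h]
  rw [hRHS]
  have hco : w * (r₁ * d₁ + r₂ * d₂)
      = ((N₁ + N₂ : ℕ) : ℝ) / (((N₁ + N₂).choose n : ℕ) : ℝ) := by
    rw [hw, hr₁, hr₂, hd₁, hd₂]
    exact coeff_eq hn h₁ h₂
  rw [hco, Finset.mul_sum]
  refine Finset.sum_congr rfl fun k _ => ?_
  by_cases h : StrictMono k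
  · simp [h]
  · simp [h]

end CombIdentity

section Pressure

variable {Ω : Type*} [MeasurableSpace Ω]

/-- The real-valued mean-field Hamiltonian. -/
noncomputable def ham (n : ℕ) (φ : (Fin n → Ω) → EReal) (N : ℕ) (x : Fin N → Ω) : ℝ :=
  ((N : ℝ) / (N.choose n : ℝ)) *
    ∑ j : Fin n → Fin N, (if StrictMono j then (φ (x ∘ j)).toReal else 0)

/-- The real partition function. -/
noncomputable def Zr (α : Measure Ω) (n : ℕ) (φ : (Fin n → Ω) → EReal) (N : ℕ) : ℝ :=
  ∫ x : Fin N → Ω, Real.exp (-(ham n φ N x)) ∂(Measure.pi fun _ : Fin N => α)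

/-- Lower bound for the Hamiltonian. -/
noncomputable def bLow (n : ℕ) (c : ℝ) (N : ℕ) : ℝ :=
  ((N : ℝ) / (N.choose n : ℝ)) * ∑ j : Fin n → Fin N, (if StrictMono j then c else 0)

/-- Points where no `φ`-value along a strictly monotone inclusion is `⊤`. -/
def Good (n : ℕ) (φ : (Fin n → Ω) → EReal) (N : ℕ) (x : Fin N → Ω) : Prop :=
  ∀ j : Fin n → Fin N, StrictMono j → φ (x ∘ j) ≠ ⊤

variable {n : ℕ} {φ : (Fin n → Ω) → EReal} {c : ℝ}

lemma good_comp {N m : ℕ} {x : Fin N → Ω} (hx : Good n φ N x) {w : Fin m → Fin N}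
    (hw : StrictMono w) : Good n φ m (x ∘ w) := by
  intro j hj
  show φ (x ∘ (w ∘ j)) ≠ ⊤
  exact hx (w ∘ j) (hw.comp hj)

lemma measurable_ham (hmeas : Measurable φ) (N : ℕ) : Measurable (ham n φ N) := by
  apply Measurable.const_mul
  apply Finset.measurable_sum
  intro j _
  by_cases h : StrictMono j
  · simp only [if_pos h]
    exact (measurable_ereal_toReal.comp hmeas).comp
      (measurable_pi_lambda _ fun i => measurable_pi_apply _)
  · simp only [if_neg h]
    exact measurable_const

lemma phi_ne_bot (hlb : ∀ y, (c : EReal) ≤ φ y) (y : Fin n → Ω) : φ y ≠ ⊥ := by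
  intro hb
  have h := hlb y
  rw [hb, le_bot_iff] at h
  exact EReal.coe_ne_bot c h

lemma toReal_ge (hlb : ∀ y, (c : EReal) ≤ φ y) {y : Fin n → Ω} (hy : φ y ≠ ⊤) :
    c ≤ (φ y).toReal := by
  have h := hlb y
  rw [(EReal.coe_toReal hy (phi_ne_bot hlb y)).symm] at h
  exact EReal.coe_le_coe_iff.1 h

lemma ham_ge (hlb : ∀ y, (c : EReal) ≤ φ y) {N : ℕ} {x : Fin N → Ω}
    (hx : Good n φ N x) : bLow n c N ≤ ham n φ N x := by
  refine mul_le_mul_of_nonneg_left (Finset.sum_le_sum fun j _ => ?_) (by positivity)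
  by_cases h : StrictMono j
  · simp only [if_pos h]
    exact toReal_ge hlb (hx j h)
  · simp [h]

lemma expNeg_ham_eq (hlb : ∀ y, (c : EReal) ≤ φ y) {N : ℕ} {x : Fin N → Ω}
    (hx : Good n φ N x) :
    expNeg ((((N : ℝ) / (N.choose n : ℝ) : ℝ) : EReal) *
        ∑ j : Fin n → Fin N, (if StrictMono j then φ (x ∘ j) else 0))
      = ENNReal.ofReal (Real.exp (-(ham n φ N x))) := by
  have hterm : ∀ j : Fin n → Fin N, (if StrictMono j then φ (x ∘ j) else 0)
      = (((if StrictMono j then (φ (x ∘ j)).toReal else 0 : ℝ)) : EReal) := by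
    intro j
    by_cases h : StrictMono j
    · simp only [if_pos h]
      exact (EReal.coe_toReal (hx j h) (phi_ne_bot hlb _)).symm
    · simp [h]
  rw [Finset.sum_congr rfl fun j _ => hterm j, ← ereal_coe_sum, ← EReal.coe_mul, expNeg_coe]
  rfl

section WithMeasure

variable (α : Measure Ω) [IsProbabilityMeasure α]

lemma ae_good (hmeas : Measurable φ)
    (hfin : (Measure.pi fun _ : Fin n => α) {y | φ y = ⊤} = 0) (N : ℕ) :
    ∀ᵐ x ∂(Measure.pi fun _ : Fin N => α), Good n φ N x := by
  have h : ∀ j : Fin n → Fin N, StrictMono j →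
      (∀ᵐ x ∂(Measure.pi fun _ : Fin N => α), φ (x ∘ j) ≠ ⊤) := by
    intro j hj
    have hmp := measurePreserving_comp_inj α j hj.injective
    have h0 : (Measure.pi fun _ : Fin N => α) {x : Fin N → Ω | φ (x ∘ j) = ⊤} = 0 := by
      have hset : {x : Fin N → Ω | φ (x ∘ j) = ⊤}
          = (fun x : Fin N → Ω => x ∘ j) ⁻¹' {y | φ y = ⊤} := rfl
      have hms : MeasurableSet {y : Fin n → Ω | φ y = ⊤} := hmeas (measurableSet_singleton ⊤)
      rw [hset, hmp.measure_preimage hms.nullMeasurableSet]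
      exact hfin
    rw [ae_iff]
    simpa using h0
  unfold Good
  rw [ae_all_iff]
  intro j
  by_cases hj : StrictMono j
  · exact (h j hj).mono fun x hx _ => hx
  · exact Filter.Eventually.of_forall fun x hj' => absurd hj' hj

lemma integrable_expNeg_ham (hmeas : Measurable φ) (hlb : ∀ y, (c : EReal) ≤ φ y)
    (hfin : (Measure.pi fun _ : Fin n => α) {y | φ y = ⊤} = 0) (N : ℕ) :
    Integrable (fun x : Fin N → Ω => Real.exp (-(ham n φ N x)))
      (Measure.pi fun _ : Fin N => α) := by
  refine Integrable.mono' (integrable_const (Real.exp (-(bLow n c N))))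
    ((Real.measurable_exp.comp (measurable_ham hmeas N).neg).aestronglyMeasurable) ?_
  filter_upwards [ae_good α hmeas hfin N] with x hx
  rw [Real.norm_eq_abs, Real.abs_exp]
  exact Real.exp_le_exp.2 (neg_le_neg (ham_ge hlb hx))

lemma lint_eq (hmeas : Measurable φ) (hlb : ∀ y, (c : EReal) ≤ φ y)
    (hfin : (Measure.pi fun _ : Fin n => α) {y | φ y = ⊤} = 0) (N : ℕ) :
    (∫⁻ x : Fin N → Ω, expNeg ((((N : ℝ) / (N.choose n : ℝ) : ℝ) : EReal) *
        ∑ j : Fin n → Fin N, (if StrictMono j then φ (x ∘ j) else 0))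
      ∂(Measure.pi fun (_ : Fin N) => α)) = ENNReal.ofReal (Zr α n φ N) := by
  rw [lintegral_congr_ae (((ae_good α hmeas hfin N)).mono fun x hx => expNeg_ham_eq hlb hx)]
  rw [← ofReal_integral_eq_lintegral_ofReal (integrable_expNeg_ham α hmeas hlb hfin N)
    (Filter.Eventually.of_forall fun x => (Real.exp_pos _).le)]
  rfl

lemma Zr_nonneg (N : ℕ) : 0 ≤ Zr α n φ N :=
  integral_nonneg fun x => (Real.exp_pos _).le

lemma integrable_ham (hmeas : Measurable φ)
    (hint : Integrable (fun y => (φ y).toReal) (Measure.pi fun _ : Fin n => α)) (N : ℕ) :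
    Integrable (ham n φ N) (Measure.pi fun _ : Fin N => α) := by
  show Integrable (fun x : Fin N → Ω => ((N : ℝ) / (N.choose n : ℝ)) *
    ∑ j : Fin n → Fin N, (if StrictMono j then (φ (x ∘ j)).toReal else 0)) _
  apply Integrable.const_mul
  apply integrable_finset_sum
  intro j _
  by_cases h : StrictMono j
  · simp only [if_pos h]
    exact integrable_comp_inj α j h.injective _ hmeas.ereal_toReal hint
  · simp only [if_neg h]
    exact integrable_const 0

lemma integral_ham (hmeas : Measurable φ)
    (hint : Integrable (fun y => (φ y).toReal) (Measure.pi fun _ : Fin n => α))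
    (N : ℕ) (hN : n ≤ N) :
    ∫ x, ham n φ N x ∂(Measure.pi fun _ : Fin N => α)
      = (N : ℝ) * ∫ y, (φ y).toReal ∂(Measure.pi fun _ : Fin n => α) := by
  have hterm : ∀ j : Fin n → Fin N,
      Integrable (fun x : Fin N → Ω => if StrictMono j then (φ (x ∘ j)).toReal else 0)
        (Measure.pi fun _ : Fin N => α) := by
    intro j
    by_cases h : StrictMono j
    · simp only [if_pos h]
      exact integrable_comp_inj α j h.injective _ hmeas.ereal_toReal hint
    · simp only [if_neg h]
      exact integrable_const 0
  have h1 : ∫ x, ham n φ N x ∂(Measure.pi fun _ : Fin N => α)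
      = ((N : ℝ) / (N.choose n : ℝ)) * ∑ j : Fin n → Fin N,
          ∫ x, (if StrictMono j then (φ (x ∘ j)).toReal else 0)
            ∂(Measure.pi fun _ : Fin N => α) := by
    rw [show (fun x : Fin N → Ω => ham n φ N x) = fun x => ((N : ℝ) / (N.choose n : ℝ)) *
      ∑ j : Fin n → Fin N, (if StrictMono j then (φ (x ∘ j)).toReal else 0) from rfl]
    rw [MeasureTheory.integral_const_mul]
    rw [integral_finset_sum _ fun j _ => hterm j]
  rw [h1]
  have h2 : ∀ j : Fin n → Fin N,
      (∫ x, (if StrictMono j then (φ (x ∘ j)).toReal else 0)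
          ∂(Measure.pi fun _ : Fin N => α))
        = (if StrictMono j then ∫ y, (φ y).toReal ∂(Measure.pi fun _ : Fin n => α) else 0) := by
    intro j
    by_cases h : StrictMono j
    · simp only [if_pos h]
      exact integral_comp_inj α j h.injective _ hmeas.ereal_toReal
    · simp [h]
  rw [Finset.sum_congr rfl fun j _ => h2 j, ← Finset.sum_filter, Finset.sum_const, card_SM,
    nsmul_eq_mul]
  have hC : ((N.choose n : ℕ) : ℝ) ≠ 0 := by
    exact_mod_cast (Nat.choose_pos hN).ne'
  field_simp

lemma Zr_ge (hmeas : Measurable φ) (hlb : ∀ y, (c : EReal) ≤ φ y)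
    (hfin : (Measure.pi fun _ : Fin n => α) {y | φ y = ⊤} = 0)
    (hint : Integrable (fun y => (φ y).toReal) (Measure.pi fun _ : Fin n => α))
    (N : ℕ) (hN : n ≤ N) :
    Real.exp (-((N : ℝ) * ∫ y, (φ y).toReal ∂(Measure.pi fun _ : Fin n => α)))
      ≤ Zr α n φ N := by
  set m := (N : ℝ) * ∫ y, (φ y).toReal ∂(Measure.pi fun _ : Fin n => α) with hm
  have hkey : ∀ x : Fin N → Ω,
      Real.exp (-m) + Real.exp (-m) * (m - ham n φ N x) ≤ Real.exp (-(ham n φ N x)) := by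
    intro x
    have h1 : (m - ham n φ N x) + 1 ≤ Real.exp (m - ham n φ N x) := Real.add_one_le_exp _
    have h2 : Real.exp (-m) * ((m - ham n φ N x) + 1)
        ≤ Real.exp (-m) * Real.exp (m - ham n φ N x) :=
      mul_le_mul_of_nonneg_left h1 (Real.exp_pos _).le
    rw [← Real.exp_add] at h2
    have h3 : -m + (m - ham n φ N x) = -(ham n φ N x) := by ring
    rw [h3] at h2
    have h4 : Real.exp (-m) + Real.exp (-m) * (m - ham n φ N x)
        = Real.exp (-m) * ((m - ham n φ N x) + 1) := by ring
    rw [h4]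
    exact h2
  have hsubi : Integrable (fun x : Fin N → Ω => m - ham n φ N x)
      (Measure.pi fun _ : Fin N => α) := by
    exact ((integrable_const m).sub (integrable_ham α hmeas hint N))
  have h2i : Integrable (fun x : Fin N → Ω => Real.exp (-m) * (m - ham n φ N x))
      (Measure.pi fun _ : Fin N => α) := hsubi.const_mul _
  have hint2 : Integrable (fun x : Fin N → Ω =>
      Real.exp (-m) + Real.exp (-m) * (m - ham n φ N x))
      (Measure.pi fun _ : Fin N => α) := (integrable_const _).add h2i
  have hmono := integral_mono hint2 (integrable_expNeg_ham α hmeas hlb hfin N) hkey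
  have e1 : (∫ x : Fin N → Ω, (Real.exp (-m) + Real.exp (-m) * (m - ham n φ N x))
      ∂(Measure.pi fun _ : Fin N => α)) = Real.exp (-m) := by
    rw [integral_add (integrable_const _) h2i, integral_const,
      MeasureTheory.integral_const_mul,
      integral_sub (integrable_const m) (integrable_ham α hmeas hint N),
      integral_const, integral_ham α hmeas hint N hN]
    simp [measure_univ, ← hm]
  rw [e1] at hmono
  exact hmono

lemma Zr_subadd (hn : 1 ≤ n) (hmeas : Measurable φ) (hlb : ∀ y, (c : EReal) ≤ φ y)
    (hfin : (Measure.pi fun _ : Fin n => α) {y | φ y = ⊤} = 0)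
    {N₁ N₂ : ℕ} (h₁ : n ≤ N₁) (h₂ : n ≤ N₂) :
    Zr α n φ (N₁ + N₂) ≤ Zr α n φ N₁ * Zr α n φ N₂ := by
  classical
  set w : ℝ := ((((N₁ + N₂).choose N₁ : ℕ) : ℝ))⁻¹ with hw
  have hchoose : ((((N₁ + N₂).choose N₁ : ℕ)) : ℝ) ≠ 0 := by
    exact_mod_cast (Nat.choose_pos (Nat.le_add_right _ _)).ne'
  have hwpos : (0 : ℝ) ≤ w := by positivity
  -- pointwise Jensen
  have hjen : ∀ x : Fin (N₁ + N₂) → Ω,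
      Real.exp (-(ham n φ (N₁ + N₂) x))
        ≤ ∑ S ∈ (Finset.powersetCard N₁
            (Finset.univ : Finset (Fin (N₁ + N₂)))).attach,
          w * (Real.exp (-(ham n φ N₁
                (x ∘ ⇑(S.1.orderEmbOfFin (mem_powersetCard_card S.2)))))
            * Real.exp (-(ham n φ N₂
                (x ∘ ⇑((S.1ᶜ).orderEmbOfFin (mem_powersetCard_card_compl S.2)))))) := by
    intro x
    have hham : ham n φ (N₁ + N₂) x
        = ∑ S ∈ (Finset.powersetCard N₁
            (Finset.univ : Finset (Fin (N₁ + N₂)))).attach,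
          w * (ham n φ N₁ (x ∘ ⇑(S.1.orderEmbOfFin (mem_powersetCard_card S.2)))
            + ham n φ N₂ (x ∘ ⇑((S.1ᶜ).orderEmbOfFin (mem_powersetCard_card_compl S.2)))) :=
      comb_identity hn h₁ h₂ (fun y => (φ y).toReal) x
    have hsumw : (∑ _S ∈ (Finset.powersetCard N₁
        (Finset.univ : Finset (Fin (N₁ + N₂)))).attach, w) = 1 := by
      rw [Finset.sum_const, nsmul_eq_mul, Finset.card_attach, Finset.card_powersetCard,
        Finset.card_univ, Fintype.card_fin, hw, mul_inv_cancel₀ hchoose]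
    have hjensen := convexOn_exp.map_sum_le
      (t := (Finset.powersetCard N₁ (Finset.univ : Finset (Fin (N₁ + N₂)))).attach)
      (w := fun _ => w)
      (p := fun S => -(ham n φ N₁ (x ∘ ⇑(S.1.orderEmbOfFin (mem_powersetCard_card S.2)))
        + ham n φ N₂ (x ∘ ⇑((S.1ᶜ).orderEmbOfFin (mem_powersetCard_card_compl S.2)))))
      (fun _ _ => hwpos) hsumw (fun _ _ => Set.mem_univ _)
    have hsum : (∑ S ∈ (Finset.powersetCard N₁
        (Finset.univ : Finset (Fin (N₁ + N₂)))).attach,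
        w • (-(ham n φ N₁ (x ∘ ⇑(S.1.orderEmbOfFin (mem_powersetCard_card S.2)))
          + ham n φ N₂ (x ∘ ⇑((S.1ᶜ).orderEmbOfFin (mem_powersetCard_card_compl S.2))))))
        = -(ham n φ (N₁ + N₂) x) := by
      rw [hham]
      simp only [smul_eq_mul, mul_neg]
      rw [Finset.sum_neg_distrib]
    calc Real.exp (-(ham n φ (N₁ + N₂) x))
        = Real.exp (∑ S ∈ (Finset.powersetCard N₁
            (Finset.univ : Finset (Fin (N₁ + N₂)))).attach,
            w • (-(ham n φ N₁ (x ∘ ⇑(S.1.orderEmbOfFin (mem_powersetCard_card S.2)))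
              + ham n φ N₂ (x ∘ ⇑((S.1ᶜ).orderEmbOfFin
                  (mem_powersetCard_card_compl S.2)))))) := by rw [hsum]
      _ ≤ ∑ S ∈ (Finset.powersetCard N₁
            (Finset.univ : Finset (Fin (N₁ + N₂)))).attach,
            w • Real.exp (-(ham n φ N₁ (x ∘ ⇑(S.1.orderEmbOfFin (mem_powersetCard_card S.2)))
              + ham n φ N₂ (x ∘ ⇑((S.1ᶜ).orderEmbOfFin
                  (mem_powersetCard_card_compl S.2))))) := hjensen
      _ = ∑ S ∈ (Finset.powersetCard N₁
            (Finset.univ : Finset (Fin (N₁ + N₂)))).attach,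
          w * (Real.exp (-(ham n φ N₁
                (x ∘ ⇑(S.1.orderEmbOfFin (mem_powersetCard_card S.2)))))
            * Real.exp (-(ham n φ N₂
                (x ∘ ⇑((S.1ᶜ).orderEmbOfFin (mem_powersetCard_card_compl S.2)))))) := by
          refine Finset.sum_congr rfl fun S _ => ?_
          rw [smul_eq_mul, neg_add, Real.exp_add]
  -- integrability of each term
  have hint_term : ∀ S : {S // S ∈ Finset.powersetCard N₁
      (Finset.univ : Finset (Fin (N₁ + N₂)))},
      Integrable (fun x : Fin (N₁ + N₂) → Ω =>
        Real.exp (-(ham n φ N₁ (x ∘ ⇑(S.1.orderEmbOfFin (mem_powersetCard_card S.2)))))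
          * Real.exp (-(ham n φ N₂
              (x ∘ ⇑((S.1ᶜ).orderEmbOfFin (mem_powersetCard_card_compl S.2))))))
        (Measure.pi fun _ : Fin (N₁ + N₂) => α) := by
    intro S
    have hm1 : Measurable (fun x : Fin (N₁ + N₂) → Ω =>
        Real.exp (-(ham n φ N₁ (x ∘ ⇑(S.1.orderEmbOfFin (mem_powersetCard_card S.2)))))) :=
      Real.measurable_exp.comp (((measurable_ham hmeas N₁).comp
        (measurable_pi_lambda _ fun i => measurable_pi_apply _)).neg)
    have hm2 : Measurable (fun x : Fin (N₁ + N₂) → Ω =>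
        Real.exp (-(ham n φ N₂
          (x ∘ ⇑((S.1ᶜ).orderEmbOfFin (mem_powersetCard_card_compl S.2)))))) :=
      Real.measurable_exp.comp (((measurable_ham hmeas N₂).comp
        (measurable_pi_lambda _ fun i => measurable_pi_apply _)).neg)
    refine Integrable.mono' (integrable_const
        (Real.exp (-(bLow n c N₁)) * Real.exp (-(bLow n c N₂))))
      ((hm1.mul hm2).aestronglyMeasurable) ?_
    filter_upwards [ae_good α hmeas hfin (N₁ + N₂)] with x hx
    have g1 : Good n φ N₁ (x ∘ ⇑(S.1.orderEmbOfFin (mem_powersetCard_card S.2))) :=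
      good_comp hx (S.1.orderEmbOfFin (mem_powersetCard_card S.2)).strictMono
    have g2 : Good n φ N₂ (x ∘ ⇑((S.1ᶜ).orderEmbOfFin (mem_powersetCard_card_compl S.2))) :=
      good_comp hx ((S.1ᶜ).orderEmbOfFin (mem_powersetCard_card_compl S.2)).strictMono
    rw [Real.norm_eq_abs, abs_mul, Real.abs_exp, Real.abs_exp]
    exact mul_le_mul (Real.exp_le_exp.2 (neg_le_neg (ham_ge hlb g1)))
      (Real.exp_le_exp.2 (neg_le_neg (ham_ge hlb g2))) (Real.exp_pos _).le (Real.exp_pos _).le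
  have hint_rhs : Integrable (fun x : Fin (N₁ + N₂) → Ω =>
      ∑ S ∈ (Finset.powersetCard N₁ (Finset.univ : Finset (Fin (N₁ + N₂)))).attach,
        w * (Real.exp (-(ham n φ N₁
              (x ∘ ⇑(S.1.orderEmbOfFin (mem_powersetCard_card S.2)))))
          * Real.exp (-(ham n φ N₂
              (x ∘ ⇑((S.1ᶜ).orderEmbOfFin (mem_powersetCard_card_compl S.2)))))))
      (Measure.pi fun _ : Fin (N₁ + N₂) => α) :=
    integrable_finset_sum _ fun S _ => (hint_term S).const_mul w
  have step1 : Zr α n φ (N₁ + N₂) ≤ ∫ x : Fin (N₁ + N₂) → Ω,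
      ∑ S ∈ (Finset.powersetCard N₁ (Finset.univ : Finset (Fin (N₁ + N₂)))).attach,
        w * (Real.exp (-(ham n φ N₁
              (x ∘ ⇑(S.1.orderEmbOfFin (mem_powersetCard_card S.2)))))
          * Real.exp (-(ham n φ N₂
              (x ∘ ⇑((S.1ᶜ).orderEmbOfFin (mem_powersetCard_card_compl S.2))))))
      ∂(Measure.pi fun _ : Fin (N₁ + N₂) => α) :=
    integral_mono (integrable_expNeg_ham α hmeas hlb hfin _) hint_rhs hjen
  have step2 : (∫ x : Fin (N₁ + N₂) → Ω,
      ∑ S ∈ (Finset.powersetCard N₁ (Finset.univ : Finset (Fin (N₁ + N₂)))).attach,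
        w * (Real.exp (-(ham n φ N₁
              (x ∘ ⇑(S.1.orderEmbOfFin (mem_powersetCard_card S.2)))))
          * Real.exp (-(ham n φ N₂
              (x ∘ ⇑((S.1ᶜ).orderEmbOfFin (mem_powersetCard_card_compl S.2))))))
      ∂(Measure.pi fun _ : Fin (N₁ + N₂) => α))
      = ∑ _S ∈ (Finset.powersetCard N₁ (Finset.univ : Finset (Fin (N₁ + N₂)))).attach,
          w * (Zr α n φ N₁ * Zr α n φ N₂) := by
    rw [integral_finset_sum _ fun S _ => (hint_term S).const_mul w]
    refine Finset.sum_congr rfl fun S _ => ?_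
    rw [MeasureTheory.integral_const_mul]
    congr 1
    have hinj : Function.Injective
        (Sum.elim (⇑(S.1.orderEmbOfFin (mem_powersetCard_card S.2)))
          (⇑((S.1ᶜ).orderEmbOfFin (mem_powersetCard_card_compl S.2)))) := by
      refine Function.Injective.sumElim
        (S.1.orderEmbOfFin (mem_powersetCard_card S.2)).injective
        ((S.1ᶜ).orderEmbOfFin (mem_powersetCard_card_compl S.2)).injective ?_
      intro a b hab
      have h1 := S.1.orderEmbOfFin_mem (mem_powersetCard_card S.2) a
      have h2 := (S.1ᶜ).orderEmbOfFin_mem (mem_powersetCard_card_compl S.2) b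
      rw [← hab] at h2
      exact (Finset.mem_compl.1 h2) h1
    have hbij : Function.Bijective
        (Sum.elim (⇑(S.1.orderEmbOfFin (mem_powersetCard_card S.2)))
          (⇑((S.1ᶜ).orderEmbOfFin (mem_powersetCard_card_compl S.2)))) := by
      rw [Fintype.bijective_iff_injective_and_card]
      exact ⟨hinj, by simp⟩
    exact integral_pair α (Equiv.ofBijective _ hbij)
      (fun z => Real.exp (-(ham n φ N₁ z))) (fun z => Real.exp (-(ham n φ N₂ z)))
  have step3 : (∑ _S ∈ (Finset.powersetCard N₁
      (Finset.univ : Finset (Fin (N₁ + N₂)))).attach,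
        w * (Zr α n φ N₁ * Zr α n φ N₂)) = Zr α n φ N₁ * Zr α n φ N₂ := by
    rw [Finset.sum_const, nsmul_eq_mul, Finset.card_attach, Finset.card_powersetCard,
      Finset.card_univ, Fintype.card_fin, hw]
    field_simp
  calc Zr α n φ (N₁ + N₂) ≤ _ := step1
    _ = _ := step2
    _ = _ := step3

end WithMeasure

end Pressure

section Fekete

lemma fekete (a : ℕ → ℝ) (n₀ : ℕ) (hn₀ : 1 ≤ n₀)
    (hsub : ∀ m k : ℕ, n₀ ≤ m → n₀ ≤ k → a (m + k) ≤ a m + a k)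
    (C : ℝ) (hlb : ∀ N, n₀ ≤ N → -(C * N) ≤ a N) :
    ∃ L : ℝ, Tendsto (fun N => a N / N) atTop (nhds L) := by
  classical
  set T : Set ℝ := {r | ∃ N : ℕ, n₀ ≤ N ∧ r = a N / N} with hT
  have hTne : T.Nonempty := ⟨a n₀ / n₀, n₀, le_rfl, rfl⟩
  have hTbdd : BddBelow T := by
    refine ⟨-C, ?_⟩
    rintro r ⟨N, hN, rfl⟩
    have hNpos : (0 : ℝ) < N := by
      have : 0 < N := lt_of_lt_of_le hn₀ hN
      exact_mod_cast this
    rw [le_div_iff₀ hNpos]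
    have := hlb N hN
    nlinarith
  set L := sInf T with hL
  refine ⟨L, Metric.tendsto_atTop.2 ?_⟩
  intro ε hε
  have hhalf : 0 < ε / 2 := by linarith
  obtain ⟨t, ht, htlt⟩ := exists_lt_of_csInf_lt hTne (show sInf T < L + ε / 2 by
    rw [← hL]; linarith)
  obtain ⟨m, hm, rfl⟩ := ht
  have hmpos : 0 < m := lt_of_lt_of_le hn₀ hm
  have hmR : (0 : ℝ) < m := by exact_mod_cast hmpos
  set B : ℝ := ∑ r ∈ Finset.range (n₀ + m), |a r| with hB
  have hBle : ∀ r, r < n₀ + m → |a r| ≤ B := fun r hr =>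
    Finset.single_le_sum (f := fun i => |a i|) (fun i _ => abs_nonneg _) (Finset.mem_range.2 hr)
  have hBnn : 0 ≤ B := Finset.sum_nonneg fun i _ => abs_nonneg _
  have key : ∀ q r : ℕ, n₀ ≤ r → a (q * m + r) ≤ q * a m + a r := by
    intro q
    induction q with
    | zero => intro r hr; simp
    | succ q ih =>
      intro r hr
      have h1 : (q + 1) * m + r = (q * m + r) + m := by ring
      rw [h1]
      have h2 : a ((q * m + r) + m) ≤ a (q * m + r) + a m :=
        hsub _ _ (le_trans hr (Nat.le_add_left _ _)) hm
      have h3 := ih r hr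
      have : ((q : ℝ) + 1) * a m + a r = ((q : ℝ) * a m + a r) + a m := by ring
      push_cast
      linarith
  set D : ℝ := B + (n₀ + m) * |L + ε / 2| with hD
  have hDnn : 0 ≤ D := by positivity
  obtain ⟨M₀, hM₀⟩ := exists_nat_gt (D / (ε / 2))
  refine ⟨max M₀ (n₀ + m) + 1, fun N hN => ?_⟩
  have hNge : n₀ + m ≤ N := le_trans (le_trans (le_max_right _ _) (Nat.le_succ _)) hN
  have hNM₀ : M₀ < N := lt_of_le_of_lt (le_max_left M₀ (n₀ + m)) (lt_of_lt_of_le (Nat.lt_succ_self _) hN)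
  have hNn₀ : n₀ ≤ N := le_trans (Nat.le_add_right _ _) hNge
  have hNpos : (0 : ℝ) < N := by
    have : 0 < N := lt_of_lt_of_le hn₀ hNn₀
    exact_mod_cast this
  set q := (N - n₀) / m with hq
  set r := N - q * m with hr
  have hqm : q * m ≤ N - n₀ := Nat.div_mul_le_self _ _
  have hmod := Nat.div_add_mod (N - n₀) m
  have hmodlt : (N - n₀) % m < m := Nat.mod_lt _ hmpos
  have hqmle : q * m ≤ N := le_trans hqm (Nat.sub_le _ _)
  have hrn₀ : n₀ ≤ r := by
    rw [hr]
    omega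
  have hrlt : r < n₀ + m := by
    have h5 : q * m + (N - n₀) % m = N - n₀ := by
      rw [mul_comm]
      exact Nat.div_add_mod _ _
    rw [hr]
    omega
  have hqr : q * m + r = N := by
    rw [hr]
    omega
  have haN : a N ≤ q * a m + a r := by
    have := key q r hrn₀
    rw [hqr] at this
    exact this
  have ham' : a m ≤ m * (L + ε / 2) := by
    rw [div_lt_iff₀ hmR] at htlt
    nlinarith
  have hqcast : (q : ℝ) * m + r = (N : ℝ) := by exact_mod_cast hqr
  have hrle : (r : ℝ) ≤ (n₀ : ℝ) + m := by
    have : r ≤ n₀ + m := le_of_lt hrlt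
    exact_mod_cast this
  have hrnn : (0 : ℝ) ≤ r := Nat.cast_nonneg r
  have hqnn : (0 : ℝ) ≤ q := Nat.cast_nonneg q
  have hstep : a N ≤ (N : ℝ) * (L + ε / 2) + D := by
    have h1 : (q : ℝ) * a m ≤ (q : ℝ) * (m * (L + ε / 2)) :=
      mul_le_mul_of_nonneg_left ham' hqnn
    have h2 : (q : ℝ) * (m * (L + ε / 2)) = ((N : ℝ) - r) * (L + ε / 2) := by
      rw [← hqcast]
      ring
    have h3 : -((r : ℝ) * (L + ε / 2)) ≤ (r : ℝ) * |L + ε / 2| := by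
      rw [neg_mul_eq_mul_neg]
      exact mul_le_mul_of_nonneg_left (neg_le_abs _) hrnn
    have h4 : (r : ℝ) * |L + ε / 2| ≤ ((n₀ : ℝ) + m) * |L + ε / 2| :=
      mul_le_mul_of_nonneg_right hrle (abs_nonneg _)
    have h5 : a r ≤ B := le_trans (le_abs_self _) (hBle r hrlt)
    have h6 : ((N : ℝ) - r) * (L + ε / 2)
        = (N : ℝ) * (L + ε / 2) - (r : ℝ) * (L + ε / 2) := by ring
    rw [hD]
    linarith [haN, h1, h2, h3, h4, h5, h6]
  have hupper : a N / N ≤ L + ε / 2 + D / N := by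
    rw [div_le_iff₀ hNpos]
    have hexp : (L + ε / 2 + D / N) * N = (N : ℝ) * (L + ε / 2) + D := by
      field_simp
    rw [hexp]
    exact hstep
  have hDsmall : D / N < ε / 2 := by
    rw [div_lt_iff₀ hNpos]
    have hM₀N : (M₀ : ℝ) ≤ (N : ℝ) := by exact_mod_cast le_of_lt hNM₀
    rw [div_lt_iff₀ hhalf] at hM₀
    nlinarith [mul_le_mul_of_nonneg_right hM₀N (le_of_lt hhalf)]
  have hlower : L ≤ a N / N := csInf_le hTbdd ⟨N, hNn₀, rfl⟩
  rw [Real.dist_eq, abs_of_nonneg (by linarith : (0 : ℝ) ≤ a N / N - L)]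
  linarith

end Fekete

end PressureProof

open PressureProof in
/-- For the mean-field Hamiltonian
`H_N(x) = N·binom(N,n)⁻¹·Σ_{i(1)<…<i(n)} φ(x_{i(1)},…,x_{i(n)})` with
`φ : Ω^n → ℝ ∪ {+∞}` Borel measurable, bounded below, symmetric and `α^{⊗n}(φ) < ∞`,
the sequence `N·p(N)` is subadditive, `p(N) ≥ −α^{⊗n}(φ)` for `N ≥ n`, and hence
`p(N)` converges to a finite limit. -/
theorem pressure_subadditive_and_converges
    {Ω : Type*} [MetricSpace Ω] [CompactSpace Ω] [MeasurableSpace Ω] [BorelSpace Ω]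
    (α : Measure Ω) [IsProbabilityMeasure α] (n : ℕ) (hn : 1 ≤ n)
    (φ : (Fin n → Ω) → EReal) (hmeas : Measurable φ)
    (c : ℝ) (hlb : ∀ y, (c : EReal) ≤ φ y)
    (hsym : ∀ (σ : Equiv.Perm (Fin n)) (y : Fin n → Ω), φ (y ∘ σ) = φ y)
    (hfin : (Measure.pi fun _ : Fin n => α) {y | φ y = ⊤} = 0)
    (hint : Integrable (fun y => (φ y).toReal) (Measure.pi fun _ : Fin n => α))
    (p : ℕ → ℝ)
    (hp : ∀ N : ℕ, p N = (N : ℝ)⁻¹ * Real.log ((∫⁻ x : Fin N → Ω,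
        expNeg ((((N : ℝ) / (N.choose n : ℝ) : ℝ) : EReal) *
          ∑ j : Fin n → Fin N, (if StrictMono j then φ (x ∘ j) else 0))
        ∂(Measure.pi fun (_ : Fin N) => α)).toReal)) :
    (∀ N₁ N₂ : ℕ, n ≤ N₁ → n ≤ N₂ →
        ((N₁ + N₂ : ℕ) : ℝ) * p (N₁ + N₂) ≤ (N₁ : ℝ) * p N₁ + (N₂ : ℝ) * p N₂)
    ∧ (∀ N : ℕ, n ≤ N →
        -(∫ y, (φ y).toReal ∂(Measure.pi fun _ : Fin n => α)) ≤ p N)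
    ∧ ∃ L : ℝ, Tendsto p atTop (nhds L) := by
  classical
  set phibar := ∫ y, (φ y).toReal ∂(Measure.pi fun _ : Fin n => α) with hphibar
  have hpZ : ∀ N : ℕ, p N = (N : ℝ)⁻¹ * Real.log (Zr α n φ N) := by
    intro N
    rw [hp N, lint_eq α hmeas hlb hfin N, ENNReal.toReal_ofReal (Zr_nonneg α N)]
  have hZpos : ∀ N : ℕ, n ≤ N → 0 < Zr α n φ N := fun N hN =>
    lt_of_lt_of_le (Real.exp_pos _) (Zr_ge α hmeas hlb hfin hint N hN)
  have hlog : ∀ N : ℕ, n ≤ N → (N : ℝ) * p N = Real.log (Zr α n φ N) := by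
    intro N hN
    have hNne : (N : ℝ) ≠ 0 := by
      have h0 : 0 < N := lt_of_lt_of_le hn hN
      exact_mod_cast h0.ne'
    rw [hpZ N, ← mul_assoc, mul_inv_cancel₀ hNne, one_mul]
  have hsub : ∀ N₁ N₂ : ℕ, n ≤ N₁ → n ≤ N₂ →
      ((N₁ + N₂ : ℕ) : ℝ) * p (N₁ + N₂) ≤ (N₁ : ℝ) * p N₁ + (N₂ : ℝ) * p N₂ := by
    intro N₁ N₂ h₁ h₂
    rw [hlog _ (le_trans h₁ (Nat.le_add_right _ _)), hlog _ h₁, hlog _ h₂]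
    calc Real.log (Zr α n φ (N₁ + N₂))
        ≤ Real.log (Zr α n φ N₁ * Zr α n φ N₂) :=
          Real.log_le_log (hZpos _ (le_trans h₁ (Nat.le_add_right _ _)))
            (Zr_subadd α hn hmeas hlb hfin h₁ h₂)
      _ = Real.log (Zr α n φ N₁) + Real.log (Zr α n φ N₂) :=
          Real.log_mul (ne_of_gt (hZpos _ h₁)) (ne_of_gt (hZpos _ h₂))
  have hlb2 : ∀ N : ℕ, n ≤ N → -phibar ≤ p N := by
    intro N hN
    have hNpos : (0 : ℝ) < N := by
      have h0 : 0 < N := lt_of_lt_of_le hn hN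
      exact_mod_cast h0
    have h1 : -((N : ℝ) * phibar) ≤ (N : ℝ) * p N := by
      rw [hlog N hN]
      exact (Real.le_log_iff_exp_le (hZpos N hN)).2 (Zr_ge α hmeas hlb hfin hint N hN)
    have h2 : (N : ℝ) * (-phibar) ≤ (N : ℝ) * p N := by linarith [h1]
    exact (mul_le_mul_iff_right₀ hNpos).1 h2
  refine ⟨hsub, fun N hN => hlb2 N hN, ?_⟩
  have hsub' : ∀ m k : ℕ, n ≤ m → n ≤ k →
      ((m + k : ℕ) : ℝ) * p (m + k) ≤ (m : ℝ) * p m + (k : ℝ) * p k :=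
    fun m k hm hk => hsub m k hm hk
  have hlb' : ∀ N : ℕ, n ≤ N → -(phibar * (N : ℝ)) ≤ (N : ℝ) * p N := by
    intro N hN
    have h0 := hlb2 N hN
    have hNnn : (0 : ℝ) ≤ (N : ℝ) := Nat.cast_nonneg N
    nlinarith
  obtain ⟨L, hL⟩ := fekete (fun N => (N : ℝ) * p N) n hn hsub' phibar hlb'
  refine ⟨L, ?_⟩
  refine Filter.Tendsto.congr' ?_ hL
  filter_upwards [eventually_ge_atTop 1] with N hN
  have hNne : (N : ℝ) ≠ 0 := by
    have h0 : 0 < N := hN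
    exact_mod_cast h0.ne'
  exact mul_div_cancel_left₀ (p N) hNne
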